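/- The function F(t, r) := A(t,T) e^{-B(t,T) r}, with B(t,T) = (1/k)(1 - e^{-k(T-t)}) and A(t,T) = exp((θ - σ²/(2k²))(B(t,T) + t - T) - (σ²/(4k)) B(t,T)²), solves the Vasicek bond-pricing PDE ∂_t F + k(θ - r)∂_r F + (σ²/2)∂_r² F - r F = 0 on [0,T] × ℝ with terminal condition F(T, r) = 1 for all r. -/

import Mathlib

/-- The Vasicek zero-coupon bond price function `F(t,r) = A(t,T) e^{-B(t,T) r}` solves
the term-structure PDE `∂_t F + k(θ - r)∂_r F + (σ²/2)∂_r² F - r F = 0` on `[0,T] × ℝ`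
with terminal condition `F(T, r) = 1`. -/
theorem vasicek_bond_pde (k θ σ T : ℝ) (hk : 0 < k) (hT : 0 < T) :
    let B : ℝ → ℝ := fun t => (1 / k) * (1 - Real.exp (-k * (T - t)))
    let A : ℝ → ℝ := fun t => Real.exp
      ((θ - σ ^ 2 / (2 * k ^ 2)) * (B t + t - T) - σ ^ 2 / (4 * k) * (B t) ^ 2)
    let F : ℝ → ℝ → ℝ := fun t r => A t * Real.exp (-(B t) * r)
    (∀ t ∈ Set.Icc (0 : ℝ) T, ∀ r : ℝ,
      deriv (fun s => F s r) t + k * (θ - r) * deriv (fun x => F t x) r +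
        σ ^ 2 / 2 * deriv (deriv (fun x => F t x)) r - r * F t r = 0) ∧
    ∀ r : ℝ, F T r = 1 := by
  intro B A F
  have hkne : k ≠ 0 := hk.ne'
  constructor
  · intro t ht r
    -- derivative of B
    have hB : HasDerivAt B (k * B t - 1) t := by
      have h1 : HasDerivAt (fun s : ℝ => -k * (T - s)) (-k * (0 - 1)) t :=
        ((hasDerivAt_const t T).sub (hasDerivAt_id t)).const_mul (-k)
      have h2 := h1.exp
      have h3 := ((hasDerivAt_const t (1:ℝ)).sub h2).const_mul (1/k)
      refine h3.congr_deriv ?_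
      simp only [B]
      field_simp
      ring
    -- derivative of the exponent of A
    have hEA : HasDerivAt (fun s => (θ - σ ^ 2 / (2 * k ^ 2)) * (B s + s - T)
        - σ ^ 2 / (4 * k) * (B s) ^ 2)
        ((θ - σ ^ 2 / (2 * k ^ 2)) * ((k * B t - 1) + 1)
          - σ ^ 2 / (4 * k) * (2 * B t ^ 1 * (k * B t - 1))) t := by
      exact (((hB.add (hasDerivAt_id t)).sub_const T).const_mul _).sub
        ((hB.pow 2).const_mul _)
    -- time derivative of F
    have hFt : HasDerivAt (fun s => F s r)
        (Real.exp ((θ - σ ^ 2 / (2 * k ^ 2)) * (B t + t - T) - σ ^ 2 / (4 * k) * (B t) ^ 2)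
            * ((θ - σ ^ 2 / (2 * k ^ 2)) * ((k * B t - 1) + 1)
              - σ ^ 2 / (4 * k) * (2 * B t ^ 1 * (k * B t - 1)))
            * Real.exp (-(B t) * r)
          + Real.exp ((θ - σ ^ 2 / (2 * k ^ 2)) * (B t + t - T) - σ ^ 2 / (4 * k) * (B t) ^ 2)
            * (Real.exp (-(B t) * r) * (-(k * B t - 1) * r))) t := by
      exact hEA.exp.mul ((hB.neg.mul_const r).exp)
    -- first space derivative of F
    have hFr : ∀ x : ℝ, HasDerivAt (fun y => F t y)
        (A t * (Real.exp (-(B t) * x) * (-(B t) * 1))) x := by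
      intro x
      exact (((hasDerivAt_id x).const_mul (-(B t))).exp).const_mul (A t)
    have d1 : deriv (fun y => F t y) = fun x => A t * (Real.exp (-(B t) * x) * (-(B t) * 1)) :=
      funext fun x => (hFr x).deriv
    -- second space derivative of F
    have hFrr : HasDerivAt (fun x => A t * (Real.exp (-(B t) * x) * (-(B t) * 1)))
        (A t * (Real.exp (-(B t) * r) * (-(B t) * 1) * (-(B t) * 1))) r := by
      have := ((((hasDerivAt_id r).const_mul (-(B t))).exp).mul_const (-(B t) * 1)).const_mul (A t)
      simpa only [id] using this
    rw [hFt.deriv, (hFr r).deriv, d1, hFrr.deriv]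
    simp only [F, A]
    set b := B t with hb
    set E := Real.exp ((θ - σ ^ 2 / (2 * k ^ 2)) * (b + t - T) - σ ^ 2 / (4 * k) * b ^ 2) with hE
    set X := Real.exp (-b * r) with hX
    field_simp
    ring
  · intro r
    simp only [F, A, B]
    norm_num
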